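/- arXiv:2605.29436 — 2 statements merged into one kernel-verified Lean document; each statement's English description precedes it below -/
import Mathlib

section
/- The Schatten 1/2-quasinorm ‖X‖_{1/2} = (Tr √X)² is superadditive on positive semidefinite matrices: for A, B ⪰ 0, ‖A + B‖_{1/2} ≥ ‖A‖_{1/2} + ‖B‖_{1/2}. -/
open ComplexOrder

/-- The positive semidefinite square root of a positive semidefinite matrix
(the definition removed from Mathlib, restored with its old meaning). -/
noncomputable def Matrix.PosSemidef.sqrt {n : Type*} [Fintype n] [DecidableEq n]
    {𝕜 : Type*} [RCLike 𝕜] {A : Matrix n n 𝕜} (hA : A.PosSemidef) : Matrix n n 𝕜 :=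
  hA.1.eigenvectorUnitary.1 * Matrix.diagonal ((↑) ∘ (√·) ∘ hA.1.eigenvalues) *
  (star hA.1.eigenvectorUnitary : Matrix n n 𝕜)

lemma Matrix.PosSemidef.sqrt_mul_self {n : Type*} [Fintype n] [DecidableEq n]
    {A : Matrix n n ℂ} (hA : A.PosSemidef) : hA.sqrt * hA.sqrt = A := by
  have hU : (star hA.1.eigenvectorUnitary : Matrix n n ℂ) * hA.1.eigenvectorUnitary.1 = 1 :=
    Unitary.star_mul_self_of_mem hA.1.eigenvectorUnitary.2
  have hd : Matrix.diagonal (((↑) ∘ (√·) ∘ hA.1.eigenvalues : n → ℂ)) *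
      Matrix.diagonal ((↑) ∘ (√·) ∘ hA.1.eigenvalues) =
      Matrix.diagonal (RCLike.ofReal ∘ hA.1.eigenvalues) := by
    rw [Matrix.diagonal_mul_diagonal]
    congr 1
    funext i
    simp only [Function.comp_apply]
    rw [← Complex.ofReal_mul, Real.mul_self_sqrt (hA.eigenvalues_nonneg i)]
    rfl
  conv_rhs => rw [hA.1.spectral_theorem]
  unfold Matrix.PosSemidef.sqrt
  rw [Unitary.conjStarAlgAut_apply]
  calc _ = hA.1.eigenvectorUnitary.1 * (Matrix.diagonal (((↑) ∘ (√·) ∘ hA.1.eigenvalues : n → ℂ))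
        * ((star hA.1.eigenvectorUnitary : Matrix n n ℂ) * hA.1.eigenvectorUnitary.1) *
        Matrix.diagonal ((↑) ∘ (√·) ∘ hA.1.eigenvalues)) *
        (star hA.1.eigenvectorUnitary : Matrix n n ℂ) := by simp only [mul_assoc]; rfl
    _ = _ := by rw [hU, mul_one, hd]

lemma Matrix.PosSemidef.posSemidef_sqrt {n : Type*} [Fintype n] [DecidableEq n]
    {A : Matrix n n ℂ} (hA : A.PosSemidef) : hA.sqrt.PosSemidef := by
  unfold Matrix.PosSemidef.sqrt
  have hD : (Matrix.diagonal (((↑) ∘ (√·) ∘ hA.1.eigenvalues : n → ℂ))).PosSemidef :=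
    Matrix.posSemidef_diagonal_iff.mpr fun i => Complex.zero_le_real.mpr (Real.sqrt_nonneg _)
  have := hD.mul_mul_conjTranspose_same hA.1.eigenvectorUnitary.1
  rwa [← Matrix.star_eq_conjTranspose] at this

section Aux
open Matrix
set_option linter.unusedSectionVars false

variable {n : Type*} [Fintype n] [DecidableEq n]

lemma trace_re_nonneg' {M : Matrix n n ℂ} (hM : M.PosSemidef) : 0 ≤ M.trace.re := by
  have h : ∀ i, 0 ≤ (M i i).re := fun i => by
    have := hM.re_dotProduct_nonneg (Pi.single i 1)
    simpa [dotProduct, Matrix.mulVec_single, Pi.single_apply, Finset.sum_ite_eq,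
      RCLike.re_to_complex] using this
  rw [Matrix.trace, Complex.re_sum]
  exact Finset.sum_nonneg fun i _ => h i

lemma pairing_nonneg' {P R : Matrix n n ℂ} (hP : P.PosSemidef) (hR : R.PosSemidef) :
    0 ≤ (P * R).trace.re := by
  have h1 : P * R = (P * hR.sqrt) * hR.sqrt := by
    rw [mul_assoc, hR.sqrt_mul_self]
  rw [h1, Matrix.trace_mul_comm, ← mul_assoc]
  have h2 : (hR.sqrt * P * hR.sqrt).PosSemidef := by
    have := hP.conjTranspose_mul_mul_same hR.sqrt
    rwa [hR.posSemidef_sqrt.isHermitian.eq] at this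
  exact trace_re_nonneg' h2

lemma trace_cs' (X Y : Matrix n n ℂ) :
    ‖(Xᴴ * Y).trace‖ ^ 2 ≤ (Xᴴ * X).trace.re * (Yᴴ * Y).trace.re := by
  let v : Matrix n n ℂ → EuclideanSpace ℂ (n × n) := fun M => WithLp.toLp 2 (fun p : n × n => M p.1 p.2)
  have hinner : ∀ M N : Matrix n n ℂ, inner ℂ (v M) (v N) = (Mᴴ * N).trace := by
    intro M N
    rw [Matrix.trace]
    simp only [PiLp.inner_apply, Matrix.diag_apply, Matrix.mul_apply,
      Matrix.conjTranspose_apply, RCLike.inner_apply, v]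
    rw [Fintype.sum_prod_type]
    rw [Finset.sum_comm]
    simp [mul_comm]
  have h := norm_inner_le_norm (𝕜 := ℂ) (v X) (v Y)
  have hx : ‖v X‖ ^ 2 = (Xᴴ * X).trace.re := by
    rw [← @inner_self_eq_norm_sq ℂ, hinner]; rfl
  have hy : ‖v Y‖ ^ 2 = (Yᴴ * Y).trace.re := by
    rw [← @inner_self_eq_norm_sq ℂ, hinner]; rfl
  calc ‖(Xᴴ * Y).trace‖ ^ 2 = ‖inner ℂ (v X) (v Y)‖ ^ 2 := by rw [hinner]
    _ ≤ (‖v X‖ * ‖v Y‖) ^ 2 := by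
        apply pow_le_pow_left₀ (norm_nonneg _) h
    _ = (Xᴴ * X).trace.re * (Yᴴ * Y).trace.re := by rw [mul_pow, hx, hy]

/-- Cauchy–Schwarz step: for `M` PSD and `Q` posdef with square root `T`,
`(Tr M).re ^ 2 ≤ (Tr Q).re * (Tr (M * Q⁻¹ * M)).re`. -/
lemma cs_step {M Q : Matrix n n ℂ} (hM : M.PosSemidef) (hQ : Q.PosDef) :
    M.trace.re ^ 2 ≤ Q.trace.re * (M * Q⁻¹ * M).trace.re := by
  set T := hQ.posSemidef.sqrt with hTdef
  have hT : T.PosSemidef := hQ.posSemidef.posSemidef_sqrt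
  have hTT : T * T = Q := hQ.posSemidef.sqrt_mul_self
  have hdet : IsUnit T.det := by
    have h1 : T.det * T.det = Q.det := by rw [← Matrix.det_mul, hTT]
    have h2 := hQ.det_pos
    have : T.det ≠ 0 := by
      intro h0
      rw [h0, mul_zero] at h1
      rw [← h1] at h2
      exact lt_irrefl _ h2
    exact isUnit_iff_ne_zero.mpr this
  have hTinv : T * T⁻¹ = 1 := Matrix.mul_nonsing_inv T hdet
  have hTH : Tᴴ = T := hT.isHermitian.eq
  have hTinvH : (T⁻¹)ᴴ = T⁻¹ := by
    rw [Matrix.conjTranspose_nonsing_inv, hTH]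
  have hQinv : T⁻¹ * T⁻¹ = Q⁻¹ := by
    rw [← hTT, Matrix.mul_inv_rev]
  have key := trace_cs' T (T⁻¹ * M)
  have e1 : Tᴴ * (T⁻¹ * M) = M := by rw [hTH, ← mul_assoc, hTinv, one_mul]
  have e2 : Tᴴ * T = Q := by rw [hTH, hTT]
  have e3 : (T⁻¹ * M)ᴴ * (T⁻¹ * M) = M * Q⁻¹ * M := by
    rw [Matrix.conjTranspose_mul, hTinvH, hM.isHermitian.eq]
    rw [mul_assoc, ← mul_assoc (T⁻¹), hQinv, ← mul_assoc]
  rw [e1, e2, e3] at key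
  have hre : M.trace.re ^ 2 ≤ ‖M.trace‖ ^ 2 := by
    have := Complex.abs_re_le_norm M.trace
    have h2 : |M.trace.re| ^ 2 ≤ ‖M.trace‖ ^ 2 := by
      apply pow_le_pow_left₀ (abs_nonneg _) (by exact this)
    rwa [sq_abs] at h2
  exact le_trans hre key

end Aux

/-- The Schatten 1/2-quasinorm `‖X‖_{1/2} = (Tr √X)²` is superadditive on
positive semidefinite matrices: `‖A + B‖_{1/2} ≥ ‖A‖_{1/2} + ‖B‖_{1/2}`. -/
theorem stmt_2 {n : Type*} [Fintype n] [DecidableEq n]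
    (A B : Matrix n n ℂ) (hA : A.PosSemidef) (hB : B.PosSemidef)
    (hAB : (A + B).PosSemidef) :
    ((hA.sqrt.trace).re) ^ 2 + ((hB.sqrt.trace).re) ^ 2 ≤
      ((hAB.sqrt.trace).re) ^ 2 := by
  set S := hAB.sqrt with hSdef
  have hS : S.PosSemidef := hAB.posSemidef_sqrt
  have hSS : S * S = A + B := hAB.sqrt_mul_self
  set t := S.trace.re with htdef
  have ht : 0 ≤ t := trace_re_nonneg' hS
  set N : ℝ := (Fintype.card n : ℝ) with hNdef
  have hN : 0 ≤ N := Nat.cast_nonneg _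
  set a := hA.sqrt.trace.re
  set b := hB.sqrt.trace.re
  -- key inequality for every ε > 0
  have key : ∀ ε : ℝ, 0 < ε → a ^ 2 + b ^ 2 ≤ (t + ε * N) ^ 2 := by
    intro ε hε
    set Q := S + (ε : ℂ) • (1 : Matrix n n ℂ) with hQdef
    have hQ : Q.PosDef := by
      apply Matrix.PosDef.posSemidef_add hS
      rw [Matrix.smul_one_eq_diagonal]
      exact Matrix.posDef_diagonal_iff.mpr fun i => Complex.zero_lt_real.mpr hε
    have hQinvPSD : (Q⁻¹).PosSemidef := hQ.inv.posSemidef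
    have hMA : (hA.sqrt).PosSemidef := hA.posSemidef_sqrt
    have hMB : (hB.sqrt).PosSemidef := hB.posSemidef_sqrt
    -- Cauchy–Schwarz for A and B
    have csA := cs_step hMA hQ
    have csB := cs_step hMB hQ
    -- rewrite the middle traces
    have eA : (hA.sqrt * Q⁻¹ * hA.sqrt).trace = (A * Q⁻¹).trace := by
      rw [Matrix.trace_mul_comm, ← mul_assoc, hA.sqrt_mul_self]
    have eB : (hB.sqrt * Q⁻¹ * hB.sqrt).trace = (B * Q⁻¹).trace := by
      rw [Matrix.trace_mul_comm, ← mul_assoc, hB.sqrt_mul_self]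
    rw [eA] at csA
    rw [eB] at csB
    set x := (A * Q⁻¹).trace.re
    set y := (B * Q⁻¹).trace.re
    set q := Q.trace.re with hqdef
    have hx : 0 ≤ x := pairing_nonneg' hA hQinvPSD
    have hy : 0 ≤ y := pairing_nonneg' hB hQinvPSD
    -- q = t + ε * N
    have hq : q = t + ε * N := by
      rw [hqdef, hQdef, Matrix.trace_add, Matrix.trace_smul, Matrix.trace_one]
      simp [Complex.add_re, N]
      rfl
    -- x + y ≤ q
    have hsum : x + y ≤ q := by
      have hdetQ : IsUnit Q.det := hQ.det_pos.ne'.isUnit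
      have hQQ : Q * Q * Q⁻¹ = Q := by
        rw [mul_assoc, Matrix.mul_nonsing_inv _ hdetQ, mul_one]
      have hdiff : Q * Q * Q⁻¹ = (A + B) * Q⁻¹ + ((ε : ℂ) • (S * Q⁻¹) + (ε : ℂ) • (S * Q⁻¹)
          + ((ε : ℂ) * (ε : ℂ)) • Q⁻¹) := by
        have hQQexp : Q * Q = S * S + ((ε : ℂ) • S + (ε : ℂ) • S
            + ((ε : ℂ) * (ε : ℂ)) • (1 : Matrix n n ℂ)) := by
          simp only [hQdef, mul_add, add_mul, mul_smul_comm, smul_mul_assoc, one_mul,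
            mul_one, smul_smul, smul_add]
          abel
        rw [hQQexp, hSS]
        simp only [add_mul, smul_mul_assoc, one_mul]
      have hq2 : q = (x + y) + (ε * (S * Q⁻¹).trace.re + ε * (S * Q⁻¹).trace.re
          + (ε * ε) * (Q⁻¹).trace.re) := by
        have := congrArg (fun M : Matrix n n ℂ => M.trace.re) (hQQ.symm.trans hdiff)
        simpa [Matrix.trace_add, Matrix.trace_smul, Complex.add_re, smul_eq_mul,
          Complex.re_ofReal_mul, Matrix.add_mul, Complex.ofReal_mul, x, y, q] using this
      have n1 : 0 ≤ (S * Q⁻¹).trace.re := pairing_nonneg' hS hQinvPSD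
      have n2 : 0 ≤ (Q⁻¹).trace.re := trace_re_nonneg' hQinvPSD
      nlinarith [mul_nonneg hε.le n1, mul_nonneg (mul_nonneg hε.le hε.le) n2]
    nlinarith [csA, csB, hx, hy, hq, hsum, trace_re_nonneg' hQ.posSemidef, sq_nonneg (x - y)]
  -- take ε → 0
  have hlim : Filter.Tendsto (fun ε : ℝ => (t + ε * N) ^ 2) (nhdsWithin 0 (Set.Ioi 0))
      (nhds ((t + 0 * N) ^ 2)) := by
    apply Filter.Tendsto.mono_left _ nhdsWithin_le_nhds
    exact (Continuous.tendsto (by continuity) 0)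
  rw [zero_mul, add_zero] at hlim
  exact ge_of_tendsto hlim (eventually_mem_nhdsWithin.mono fun ε hε => key ε hε)
end

section
/- For p_± = 1/3 + x/6 ± (√3 y)/6 and p_3 = 1/3 − x/3, where x² + y² + z² = 1 (so p_±, p_3 ≥ 0 form a probability vector), the quantity √(p₊p₋) + √(p₊p₃) + √(p₋p₃) is bounded below by (1 + |z|)/2. -/
set_option maxHeartbeats 1200000

private lemma lemA (u v w : ℝ) (hu : 0 ≤ u) (hv : 0 ≤ v) (hw : 0 ≤ w) :
    0 ≤ (u-v)^2*(u^2+v^2+4*u*v-w^2) + (u-w)^2*(u^2+w^2+4*u*w-v^2)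
      + (v-w)^2*(v^2+w^2+4*v*w-u^2) := by
  nlinarith [mul_nonneg (mul_nonneg hu hv) hw, sq_nonneg (u-v), sq_nonneg (u-w),
    sq_nonneg (v-w), sq_nonneg (u+v-w), sq_nonneg (u-v+w), sq_nonneg (-u+v+w),
    mul_nonneg hu hv, mul_nonneg hu hw, mul_nonneg hv hw, sq_nonneg (u+v+w)]

private lemma lemB (u v w : ℝ) (hu : 0 ≤ u) (hv : 0 ≤ v) (hw : 0 ≤ w) :
    0 ≤ (u-v)^2*(u^2+u*v+v^2-w*(u+v)) + (u-w)^2*(u^2+u*w+w^2-v*(u+w))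
      + (v-w)^2*(v^2+v*w+w^2-u*(v+w)) := by
  nlinarith [mul_nonneg (mul_nonneg hu hv) hw, sq_nonneg (u-v), sq_nonneg (u-w),
    sq_nonneg (v-w), sq_nonneg (u+v-w), sq_nonneg (u-v+w), sq_nonneg (-u+v+w),
    mul_nonneg hu hv, mul_nonneg hu hw, mul_nonneg hv hw, sq_nonneg (u+v+w)]

/-- For `p± = 1/3 + x/6 ± √3 y/6`, `p₃ = 1/3 − x/3` with `x² + y² + z² = 1`
and all `p`'s nonnegative, `√(p₊p₋) + √(p₊p₃) + √(p₋p₃) ≥ (1 + |z|)/2`. -/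
theorem stmt_12 (x y z : ℝ) (hsphere : x ^ 2 + y ^ 2 + z ^ 2 = 1)
    (hp : 0 ≤ 1/3 + x/6 + Real.sqrt 3 * y / 6)
    (hm : 0 ≤ 1/3 + x/6 - Real.sqrt 3 * y / 6)
    (h3 : 0 ≤ 1/3 - x/3) :
    (1 + |z|) / 2 ≤
      Real.sqrt ((1/3 + x/6 + Real.sqrt 3 * y / 6) * (1/3 + x/6 - Real.sqrt 3 * y / 6))
      + Real.sqrt ((1/3 + x/6 + Real.sqrt 3 * y / 6) * (1/3 - x/3))
      + Real.sqrt ((1/3 + x/6 - Real.sqrt 3 * y / 6) * (1/3 - x/3)) := by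
  have hr2 : Real.sqrt 3 ^ 2 = 3 := Real.sq_sqrt (by norm_num)
  rw [Real.sqrt_mul hp, Real.sqrt_mul hp, Real.sqrt_mul hm]
  set u := Real.sqrt (1/3 + x/6 + Real.sqrt 3 * y / 6) with hudef
  set v := Real.sqrt (1/3 + x/6 - Real.sqrt 3 * y / 6) with hvdef
  set w := Real.sqrt (1/3 - x/3) with hwdef
  have hu0 : 0 ≤ u := Real.sqrt_nonneg _
  have hv0 : 0 ≤ v := Real.sqrt_nonneg _
  have hw0 : 0 ≤ w := Real.sqrt_nonneg _
  have hu2 : u^2 = 1/3 + x/6 + Real.sqrt 3 * y / 6 := Real.sq_sqrt hp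
  have hv2 : v^2 = 1/3 + x/6 - Real.sqrt 3 * y / 6 := Real.sq_sqrt hm
  have hw2 : w^2 = 1/3 - x/3 := Real.sq_sqrt h3
  have hsum : u^2 + v^2 + w^2 = 1 := by rw [hu2, hv2, hw2]; ring
  have hxy : x^2 + y^2 = 2*((u^2-v^2)^2+(u^2-w^2)^2+(v^2-w^2)^2) := by
    rw [hu2, hv2, hw2]; linear_combination (-(y^2)/3) * hr2
  have hzz : z^2 = 1 - 2*((u^2-v^2)^2+(u^2-w^2)^2+(v^2-w^2)^2) := by
    rw [← hxy]; linarith [hsphere]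
  have hE := lemA u v w hu0 hv0 hw0
  have hT := lemB u v w hu0 hv0 hw0
  have hid1 : 2*((u^2-v^2)^2+(u^2-w^2)^2+(v^2-w^2)^2) =
      ((u-v)^2*(u^2+v^2+4*u*v-w^2) + (u-w)^2*(u^2+w^2+4*u*w-v^2)
        + (v-w)^2*(v^2+w^2+4*v*w-u^2)) + 2 - 2*(u*v+u*w+v*w) := by
    linear_combination (2*(u^2+v^2+w^2)+2-2*(u*v+u*w+v*w)) * hsum
  have h1 : 1 ≤ 2*(u*v+u*w+v*w) := by nlinarith [sq_nonneg z, hzz, hid1, hE]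
  have hid2 : (2*(u*v+u*w+v*w)-1)^2 = z^2 +
      2*((u-v)^2*(u^2+u*v+v^2-w*(u+v)) + (u-w)^2*(u^2+u*w+w^2-v*(u+w))
        + (v-w)^2*(v^2+v*w+w^2-u*(v+w))) := by
    rw [hzz]; linear_combination (4*(u*v+u*w+v*w)) * hsum
  have hK : 0 ≤ 2*(u*v+u*w+v*w) - 1 := by linarith
  have habs : |z| ≤ 2*(u*v+u*w+v*w) - 1 := by
    have hzle : z^2 ≤ (2*(u*v+u*w+v*w)-1)^2 := by linarith [hT, hid2.ge]
    calc |z| = Real.sqrt (z^2) := (Real.sqrt_sq_eq_abs z).symm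
      _ ≤ Real.sqrt ((2*(u*v+u*w+v*w)-1)^2) := Real.sqrt_le_sqrt hzle
      _ = 2*(u*v+u*w+v*w) - 1 := Real.sqrt_sq hK
  linarith
end
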